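/- Let X and Y be Banach spaces and N ∈ ℕ. If Y has property β (with some constant ρ ∈ [0,1)) and the pair (X, 𝕂) has the N-homogeneous polynomial L_{p,p}, then the pair (X, Y) has the N-homogeneous polynomial L_{p,p}. -/

import Mathlib

/-- The norm of the `N`-homogeneous polynomial `x ↦ A(x,…,x)` associated to a continuous
`N`-linear map `A`, namely `sup {‖A(x,…,x)‖ : ‖x‖ ≤ 1}`. -/
noncomputable def polyNorm {𝕜 X Z : Type*} [RCLike 𝕜] [NormedAddCommGroup X] [NormedSpace 𝕜 X]
    [NormedAddCommGroup Z] [NormedSpace 𝕜 Z] {N : ℕ}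
    (A : ContinuousMultilinearMap 𝕜 (fun _ : Fin N => X) Z) : ℝ :=
  sSup {r : ℝ | ∃ x : X, ‖x‖ ≤ 1 ∧ r = ‖A (fun _ => x)‖}

section helpers
variable {𝕜 X Z : Type*} [RCLike 𝕜] [NormedAddCommGroup X] [NormedSpace 𝕜 X]
  [NormedAddCommGroup Z] [NormedSpace 𝕜 Z] {N : ℕ}

lemma polyNorm_bdd (A : ContinuousMultilinearMap 𝕜 (fun _ : Fin N => X) Z) :
    BddAbove {r : ℝ | ∃ x : X, ‖x‖ ≤ 1 ∧ r = ‖A (fun _ => x)‖} := by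
  refine ⟨‖A‖, ?_⟩
  rintro r ⟨x, hx, rfl⟩
  calc ‖A (fun _ => x)‖ ≤ ‖A‖ * ∏ _i : Fin N, ‖x‖ := A.le_opNorm _
    _ ≤ ‖A‖ * 1 := by
        refine mul_le_mul_of_nonneg_left ?_ (norm_nonneg A)
        exact Finset.prod_le_one (fun _ _ => norm_nonneg x) (fun _ _ => hx)
    _ = ‖A‖ := mul_one _

lemma apply_le_polyNorm (A : ContinuousMultilinearMap 𝕜 (fun _ : Fin N => X) Z)
    (x : X) (hx : ‖x‖ ≤ 1) : ‖A (fun _ => x)‖ ≤ polyNorm A :=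
  le_csSup (polyNorm_bdd A) ⟨x, hx, rfl⟩

lemma polyNorm_nonneg (A : ContinuousMultilinearMap 𝕜 (fun _ : Fin N => X) Z) :
    0 ≤ polyNorm A :=
  (norm_nonneg _).trans (apply_le_polyNorm A 0 (by simp))

lemma polyNorm_le (A : ContinuousMultilinearMap 𝕜 (fun _ : Fin N => X) Z) {C : ℝ}
    (hC : 0 ≤ C) (h : ∀ x : X, ‖x‖ ≤ 1 → ‖A (fun _ => x)‖ ≤ C) : polyNorm A ≤ C :=
  Real.sSup_le (by rintro r ⟨x, hx, rfl⟩; exact h x hx) hC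

lemma polyNorm_smul (c : 𝕜) (A : ContinuousMultilinearMap 𝕜 (fun _ : Fin N => X) Z) :
    polyNorm (c • A) = ‖c‖ * polyNorm A := by
  have key : ∀ (d : 𝕜) (B : ContinuousMultilinearMap 𝕜 (fun _ : Fin N => X) Z),
      polyNorm (d • B) ≤ ‖d‖ * polyNorm B := by
    intro d B
    refine polyNorm_le _ (mul_nonneg (norm_nonneg d) (polyNorm_nonneg B)) fun z hz => ?_
    have : (d • B) (fun _ => z) = d • (B fun _ => z) := rfl
    rw [this, norm_smul]
    exact mul_le_mul_of_nonneg_left (apply_le_polyNorm B z hz) (norm_nonneg d)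
  refine le_antisymm (key c A) ?_
  rcases eq_or_ne c 0 with rfl | hc
  · simpa using polyNorm_nonneg ((0 : 𝕜) • A)
  · have h1 : polyNorm A ≤ ‖c‖⁻¹ * polyNorm (c • A) := by
      have := key c⁻¹ (c • A)
      rwa [inv_smul_smul₀ hc, norm_inv] at this
    have hc0 : (0:ℝ) < ‖c‖ := norm_pos_iff.2 hc
    calc ‖c‖ * polyNorm A ≤ ‖c‖ * (‖c‖⁻¹ * polyNorm (c • A)) :=
          mul_le_mul_of_nonneg_left h1 hc0.le
      _ = polyNorm (c • A) := by field_simp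

end helpers

/-- The pair `(X, Z)` has the `N`-homogeneous polynomial `L_{p,p}`: for every `ε > 0` and every
unit vector `x` there is `η(ε,x) > 0` such that every norm-one `N`-homogeneous polynomial `P`
with `‖P(x)‖ > 1 − η` can be approximated within `ε` by a norm-one `N`-homogeneous polynomial
`Q` with `‖Q(x)‖ = 1`. -/
def PolyLpp (𝕜 X Z : Type*) [RCLike 𝕜] [NormedAddCommGroup X] [NormedSpace 𝕜 X]
    [NormedAddCommGroup Z] [NormedSpace 𝕜 Z] (N : ℕ) : Prop :=
  ∀ ε > (0 : ℝ), ∀ x : X, ‖x‖ = 1 → ∃ η > (0 : ℝ),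
    ∀ P : ContinuousMultilinearMap 𝕜 (fun _ : Fin N => X) Z, polyNorm P = 1 →
      ‖P (fun _ => x)‖ > 1 - η →
      ∃ Q : ContinuousMultilinearMap 𝕜 (fun _ : Fin N => X) Z,
        polyNorm Q = 1 ∧ ‖Q (fun _ => x)‖ = 1 ∧ polyNorm (Q - P) < ε

set_option maxHeartbeats 1600000 in
/-- If `Y` has property β with constant `ρ ∈ [0,1)` (witnessed by families
`(y i)` and `(g i)`) and the pair `(X, 𝕜)` has the `N`-homogeneous polynomial `L_{p,p}`, then
the pair `(X, Y)` has the `N`-homogeneous polynomial `L_{p,p}`. -/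
theorem stmt_7 {𝕜 X Y : Type*} [RCLike 𝕜] [NormedAddCommGroup X] [NormedSpace 𝕜 X]
    [CompleteSpace X] [NormedAddCommGroup Y] [NormedSpace 𝕜 Y] [CompleteSpace Y]
    (N : ℕ) {I : Type*} (ρ : ℝ) (hρ0 : 0 ≤ ρ) (hρ1 : ρ < 1)
    (y : I → Y) (g : I → (Y →L[𝕜] 𝕜))
    (hy : ∀ i, ‖y i‖ = 1) (hg : ∀ i, ‖g i‖ = 1) (hgy : ∀ i, g i (y i) = 1)
    (hoff : ∀ i j, i ≠ j → ‖g i (y j)‖ ≤ ρ)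
    (hnorm : ∀ z : Y, IsLUB {r : ℝ | ∃ i, r = ‖g i z‖} ‖z‖)
    (hX : PolyLpp 𝕜 X 𝕜 N) :
    PolyLpp 𝕜 X Y N := by
  intro ε hε x hx
  have hρ1' : (0:ℝ) < 1 - ρ := by linarith
  set c : ℝ := (1 - ρ) / (1 + ρ) with hc
  have hc0 : 0 < c := div_pos hρ1' (by linarith)
  set ε' : ℝ := ε * c / 4 with hε'def
  have hε'0 : 0 < ε' := by positivity
  obtain ⟨ηs, hηs0, hηs⟩ := hX ε' hε'0 x hx
  set η : ℝ := min ηs (min ε' (1/2)) with hηdef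
  have hη0 : 0 < η := lt_min hηs0 (lt_min hε'0 (by norm_num))
  have hηηs : η ≤ ηs := min_le_left _ _
  have hηε' : η ≤ ε' := le_trans (min_le_right _ _) (min_le_left _ _)
  have hηhalf : η ≤ 1/2 := le_trans (min_le_right _ _) (min_le_right _ _)
  refine ⟨η, hη0, ?_⟩
  intro P hP hPx
  -- pick i with ‖g i (P x^N)‖ > 1 - η
  obtain ⟨r, ⟨i, rfl⟩, hi⟩ :
      ∃ r ∈ {r : ℝ | ∃ i, r = ‖g i (P fun _ => x)‖}, 1 - η < r := by
    by_contra h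
    push_neg at h
    have : ‖P (fun _ => x)‖ ≤ 1 - η := (hnorm _).2 fun r hr => h r hr
    linarith
  set p := (g i).compContinuousMultilinearMap P with hp
  have hpapp : ∀ z : X, p (fun _ => z) = g i (P (fun _ => z)) := fun z => rfl
  have hgle : ∀ (j : I) (z : Y), ‖g j z‖ ≤ ‖z‖ := fun j z => by
    calc ‖g j z‖ ≤ ‖g j‖ * ‖z‖ := (g j).le_opNorm z
      _ = ‖z‖ := by rw [hg j, one_mul]
  have hPle : ∀ z : X, ‖z‖ ≤ 1 → ‖P (fun _ => z)‖ ≤ 1 := fun z hz =>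
    hP ▸ apply_le_polyNorm P z hz
  set t := polyNorm p with ht
  have htle : t ≤ 1 := polyNorm_le p zero_le_one fun z hz =>
    (hgle i _).trans (hPle z hz)
  have hpx : 1 - η < ‖p (fun _ => x)‖ := by rw [hpapp]; exact hi
  have htx : 1 - η < t := lt_of_lt_of_le hpx (apply_le_polyNorm p x hx.le)
  have ht0 : 0 < t := by linarith
  set p' := ((t⁻¹ : ℝ) : 𝕜) • p with hp'
  have hp'norm : polyNorm p' = 1 := by
    rw [hp', polyNorm_smul, RCLike.norm_ofReal, abs_of_nonneg (by positivity), ← ht]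
    field_simp
  have hp'app : ∀ z : X, p' (fun _ => z) = ((t⁻¹ : ℝ) : 𝕜) * p (fun _ => z) := fun z => rfl
  have hinv1 : 1 ≤ t⁻¹ := by
    nlinarith [mul_inv_cancel₀ (ne_of_gt ht0), inv_nonneg.2 ht0.le]
  have hp'x : 1 - ηs < ‖p' (fun _ => x)‖ := by
    have h1 : ‖p (fun _ => x)‖ ≤ t⁻¹ * ‖p (fun _ => x)‖ := by
      nth_rewrite 1 [← one_mul ‖p (fun _ => x)‖]
      exact mul_le_mul_of_nonneg_right hinv1 (norm_nonneg _)
    have : ‖p' (fun _ => x)‖ = t⁻¹ * ‖p (fun _ => x)‖ := by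
      rw [hp'app, norm_mul, RCLike.norm_ofReal, abs_of_nonneg (by positivity)]
    linarith
  obtain ⟨q, hq1, hqx, hqp'⟩ := hηs p' hp'norm hp'x
  have hqle : ∀ z : X, ‖z‖ ≤ 1 → ‖q (fun _ => z)‖ ≤ 1 := fun z hz =>
    hq1 ▸ apply_le_polyNorm q z hz
  -- the parameter lam
  set lam : ℝ := ρ * (ε' + η) / (1 - ρ) with hlam
  have hlam0 : 0 ≤ lam := by positivity
  have hlamkey : ρ * (lam + ε' + η) = lam := by
    have h : lam * (1 - ρ) = ρ * (ε' + η) := by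
      rw [hlam]; field_simp
    linear_combination -h
  -- building blocks
  set R : ContinuousMultilinearMap 𝕜 (fun _ : Fin N => X) 𝕜 :=
    (((1 + lam : ℝ) : 𝕜)) • q - p with hR
  have hRapp : ∀ z : X, R (fun _ => z)
      = ((lam : ℝ) : 𝕜) • q (fun _ => z) + (q - p') (fun _ => z) + (p' - p) (fun _ => z) := by
    intro z
    simp only [hR, ContinuousMultilinearMap.sub_apply, ContinuousMultilinearMap.smul_apply,
      smul_eq_mul]
    push_cast
    ring
  have hRle : ∀ z : X, ‖z‖ ≤ 1 → ‖R (fun _ => z)‖ ≤ lam + ε' + η := by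
    intro z hz
    rw [hRapp]
    have h1 : ‖((lam : ℝ) : 𝕜) • q (fun _ => z)‖ ≤ lam := by
      rw [norm_smul, RCLike.norm_ofReal, abs_of_nonneg hlam0]
      calc lam * ‖q (fun _ => z)‖ ≤ lam * 1 :=
            mul_le_mul_of_nonneg_left (hqle z hz) hlam0
        _ = lam := mul_one _
    have h2 : ‖(q - p') (fun _ => z)‖ ≤ ε' :=
      (apply_le_polyNorm (q - p') z hz).trans hqp'.le
    have h3 : ‖(p' - p) (fun _ => z)‖ ≤ η := by
      have happ : (p' - p) (fun _ => z) = (((t⁻¹ - 1 : ℝ) : 𝕜)) * p (fun _ => z) := by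
        simp only [ContinuousMultilinearMap.sub_apply, hp'app]
        push_cast
        ring
      rw [happ, norm_mul, RCLike.norm_ofReal]
      have hti : 0 ≤ t⁻¹ - 1 := by linarith
      rw [abs_of_nonneg hti]
      have hple : ‖p (fun _ => z)‖ ≤ t := apply_le_polyNorm p z hz
      calc (t⁻¹ - 1) * ‖p (fun _ => z)‖ ≤ (t⁻¹ - 1) * t :=
            mul_le_mul_of_nonneg_left hple hti
        _ = 1 - t := by field_simp
        _ ≤ η := by linarith
    calc ‖((lam : ℝ) : 𝕜) • q (fun _ => z) + (q - p') (fun _ => z) + (p' - p) (fun _ => z)‖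
        ≤ ‖((lam : ℝ) : 𝕜) • q (fun _ => z) + (q - p') (fun _ => z)‖ + ‖(p' - p) (fun _ => z)‖ :=
          norm_add_le _ _
      _ ≤ ‖((lam : ℝ) : 𝕜) • q (fun _ => z)‖ + ‖(q - p') (fun _ => z)‖ + ‖(p' - p) (fun _ => z)‖ := by
          gcongr; exact norm_add_le _ _
      _ ≤ lam + ε' + η := by gcongr
  set L : 𝕜 →L[𝕜] Y := (ContinuousLinearMap.id 𝕜 𝕜).smulRight (y i) with hL
  have hLapp : ∀ a : 𝕜, L a = a • y i := fun a => rfl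
  set Q₀ : ContinuousMultilinearMap 𝕜 (fun _ : Fin N => X) Y :=
    P + L.compContinuousMultilinearMap R with hQ₀
  have hQ₀app : ∀ z : X, Q₀ (fun _ => z) = P (fun _ => z) + R (fun _ => z) • y i := fun z => rfl
  have hgQ₀ : ∀ (j : I) (z : X), g j (Q₀ (fun _ => z))
      = g j (P (fun _ => z)) + R (fun _ => z) * g j (y i) := by
    intro j z
    rw [hQ₀app, map_add, map_smul, smul_eq_mul]
  have hQ₀i : ∀ z : X, g i (Q₀ (fun _ => z)) = ((1 + lam : ℝ) : 𝕜) * q (fun _ => z) := by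
    intro z
    rw [hgQ₀, hgy i, mul_one, hR, ContinuousMultilinearMap.sub_apply,
      ContinuousMultilinearMap.smul_apply, smul_eq_mul, hpapp]
    ring
  have hQ₀le : ∀ z : X, ‖z‖ ≤ 1 → ‖Q₀ (fun _ => z)‖ ≤ 1 + lam := by
    intro z hz
    refine (hnorm _).2 ?_
    rintro r ⟨j, rfl⟩
    rcases eq_or_ne j i with rfl | hji
    · rw [hQ₀i z, norm_mul, RCLike.norm_ofReal, abs_of_nonneg (by linarith)]
      calc (1 + lam) * ‖q (fun _ => z)‖ ≤ (1 + lam) * 1 :=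
            mul_le_mul_of_nonneg_left (hqle z hz) (by linarith)
        _ = 1 + lam := mul_one _
    · rw [hgQ₀]
      calc ‖g j (P fun _ => z) + R (fun _ => z) * g j (y i)‖
          ≤ ‖g j (P fun _ => z)‖ + ‖R (fun _ => z)‖ * ‖g j (y i)‖ := by
            rw [← norm_mul]; exact norm_add_le _ _
        _ ≤ 1 + (lam + ε' + η) * ρ := by
            gcongr
            · exact (hgle j _).trans (hPle z hz)
            · exact hRle z hz
            · exact hoff j i hji
        _ = 1 + ρ * (lam + ε' + η) := by ring
        _ = 1 + lam := by rw [hlamkey]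
  have hQ₀x : ‖Q₀ (fun _ => x)‖ = 1 + lam := by
    refine le_antisymm (hQ₀le x hx.le) ?_
    have := hgle i (Q₀ (fun _ => x))
    rw [hQ₀i x, norm_mul, RCLike.norm_ofReal, abs_of_nonneg (by linarith), hqx, mul_one] at this
    exact this
  have hQ₀norm : polyNorm Q₀ = 1 + lam := by
    refine le_antisymm (polyNorm_le Q₀ (by linarith) hQ₀le) ?_
    rw [← hQ₀x]
    exact apply_le_polyNorm Q₀ x hx.le
  -- the final polynomial Q
  set Q : ContinuousMultilinearMap 𝕜 (fun _ : Fin N => X) Y :=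
    (((1 + lam : ℝ) : 𝕜))⁻¹ • Q₀ with hQ
  have hcoef : (((1 + lam : ℝ) : 𝕜))⁻¹ = (((1 + lam)⁻¹ : ℝ) : 𝕜) := by
    rw [RCLike.ofReal_inv]
  have hlam1 : (0:ℝ) < 1 + lam := by linarith
  have hQnorm : polyNorm Q = 1 := by
    rw [hQ, hcoef, polyNorm_smul, RCLike.norm_ofReal, abs_of_nonneg (by positivity), hQ₀norm]
    field_simp
  have hQapp : ∀ z : X, Q (fun _ => z) = (((1 + lam : ℝ) : 𝕜))⁻¹ • Q₀ (fun _ => z) :=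
    fun z => rfl
  have hQx : ‖Q (fun _ => x)‖ = 1 := by
    rw [hQapp, norm_smul, hcoef, RCLike.norm_ofReal, abs_of_nonneg (by positivity), hQ₀x]
    field_simp
  refine ⟨Q, hQnorm, hQx, ?_⟩
  have hQP : polyNorm (Q - P) ≤ 2 * lam + ε' + η := by
    refine polyNorm_le _ (by positivity) fun z hz => ?_
    have hsplit : (Q - P) (fun _ => z)
        = ((((1 + lam : ℝ) : 𝕜))⁻¹ - 1) • Q₀ (fun _ => z) + R (fun _ => z) • y i := by
      rw [ContinuousMultilinearMap.sub_apply, hQapp, hQ₀app]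
      module
    rw [hsplit]
    have h1 : ‖((((1 + lam : ℝ) : 𝕜))⁻¹ - 1) • Q₀ (fun _ => z)‖ ≤ lam := by
      rw [norm_smul]
      have hcv : (((1 + lam : ℝ) : 𝕜))⁻¹ - 1 = (((1 + lam)⁻¹ - 1 : ℝ) : 𝕜) := by
        rw [hcoef]; push_cast; ring
      rw [hcv, RCLike.norm_ofReal]
      have habs : |(1 + lam)⁻¹ - 1| = lam / (1 + lam) := by
        rw [abs_sub_comm, abs_of_nonneg]
        · field_simp; ring
        · rw [sub_nonneg, inv_le_one_iff₀]; right; linarith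
      rw [habs]
      calc lam / (1 + lam) * ‖Q₀ (fun _ => z)‖ ≤ lam / (1 + lam) * (1 + lam) :=
            mul_le_mul_of_nonneg_left (hQ₀le z hz) (by positivity)
        _ = lam := by field_simp
    have h2 : ‖R (fun _ => z) • y i‖ ≤ lam + ε' + η := by
      rw [norm_smul, hy i, mul_one]
      exact hRle z hz
    calc ‖((((1 + lam : ℝ) : 𝕜))⁻¹ - 1) • Q₀ (fun _ => z) + R (fun _ => z) • y i‖
        ≤ ‖((((1 + lam : ℝ) : 𝕜))⁻¹ - 1) • Q₀ (fun _ => z)‖ + ‖R (fun _ => z) • y i‖ :=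
          norm_add_le _ _
      _ ≤ lam + (lam + ε' + η) := add_le_add h1 h2
      _ = 2 * lam + ε' + η := by ring
  refine lt_of_le_of_lt hQP ?_
  -- 2 lam + ε' + η ≤ ε/2 < ε
  have hεc : ε' = ε * ((1 - ρ) / (1 + ρ)) / 4 := by rw [hε'def, hc]
  have hb : (2 * lam + ε' + η) * (1 - ρ) = (ε' + η) * (1 + ρ) := by
    have h : lam * (1 - ρ) = ρ * (ε' + η) := by rw [hlam]; field_simp
    linear_combination 2 * h
  have hfin : (2 * lam + ε' + η) * (1 - ρ) ≤ 2 * ε' * (1 + ρ) := by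
    rw [hb]
    exact mul_le_mul_of_nonneg_right (by linarith) (by linarith)
  have h2e : 2 * ε' * (1 + ρ) = ε * (1 - ρ) / 2 := by
    rw [hεc]; field_simp; ring
  have h3 : (2 * lam + ε' + η) * (1 - ρ) ≤ (ε / 2) * (1 - ρ) := by
    rw [h2e] at hfin; linarith
  have h4 : 2 * lam + ε' + η ≤ ε / 2 := le_of_mul_le_mul_right h3 hρ1'
  linarith
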